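/- Let N and k be integers with 0 < k < N. There exists an integer r such that for every integer i, an ascent occurs at position i in the Euclidean array E(k,N) (i.e. (k·(i-1)) mod N < (k·i) mod N) if and only if a descent occurs at position i + r in the Euclidean array E(N-k, N) (i.e. ((N-k)·(i+r-1)) mod N > ((N-k)·(i+r)) mod N). -/

import Mathlib

private lemma ascent_iff' {N k : ℤ} (hk : 0 < k) (hkN : k < N) (i : ℤ) :
    (k * (i - 1)) % N < (k * i) % N ↔ k ≤ (k * i) % N := by
  have hN : 0 < N := hk.trans hkN
  have ha := Int.emod_nonneg (k * (i - 1)) hN.ne'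
  have ha' := Int.emod_lt_of_pos (k * (i - 1)) hN
  have hb : (k * i) % N = ((k * (i - 1)) % N + k) % N := by
    rw [show k * i = k * (i - 1) + k by ring, Int.add_emod, Int.emod_eq_of_lt hk.le hkN]
  set a := (k * (i - 1)) % N
  by_cases h : a + k < N
  · rw [hb, Int.emod_eq_of_lt (by omega) h]; omega
  · rw [hb, show a + k = (a + k - N) + N * 1 by ring, Int.add_mul_emod_self_left,
      Int.emod_eq_of_lt (by omega) (by omega)]
    omega

private lemma descent_iff' {N k : ℤ} (hk : 0 < k) (hkN : k < N) (i : ℤ) :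
    (k * (i - 1)) % N > (k * i) % N ↔ (k * i) % N < k := by
  have hN : 0 < N := hk.trans hkN
  have ha := Int.emod_nonneg (k * (i - 1)) hN.ne'
  have ha' := Int.emod_lt_of_pos (k * (i - 1)) hN
  have hb : (k * i) % N = ((k * (i - 1)) % N + k) % N := by
    rw [show k * i = k * (i - 1) + k by ring, Int.add_emod, Int.emod_eq_of_lt hk.le hkN]
  set a := (k * (i - 1)) % N
  by_cases h : a + k < N
  · rw [hb, Int.emod_eq_of_lt (by omega) h]; omega
  · rw [hb, show a + k = (a + k - N) + N * 1 by ring, Int.add_mul_emod_self_left,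
      Int.emod_eq_of_lt (by omega) (by omega)]
    omega

private lemma dvd_lt_iff' {d k b : ℤ} (hd0 : 0 < d) (hdk : d ∣ k) (hdb : d ∣ b) :
    k - d < b ↔ k ≤ b := by
  obtain ⟨v, rfl⟩ := hdk; obtain ⟨u, rfl⟩ := hdb
  rw [show d * v - d = d * (v - 1) by ring, mul_lt_mul_iff_right₀ hd0, mul_le_mul_iff_right₀ hd0]
  omega

/-- Up to a rotation `r`, the ascents of the Euclidean array `E(k,N)` coincide with the
descents of `E(N-k, N)`: assigning notes to ascents of `E(k,N)` yields the Euclidean rhythm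
of `E(N-k,N)` up to rotation. -/
theorem euclidean_rhythm_complement (N k : ℤ) (hk : 0 < k) (hkN : k < N) :
    ∃ r : ℤ, ∀ i : ℤ,
      ((k * (i - 1)) % N < (k * i) % N) ↔
        (((N - k) * (i + r - 1)) % N > ((N - k) * (i + r)) % N) := by
  have hN : 0 < N := hk.trans hkN
  set r : ℤ := Int.gcdA k N with hr
  set B : ℤ := Int.gcdB k N with hB
  set d : ℤ := (Int.gcd k N : ℤ) with hd
  have hbez : d = k * r + N * B := Int.gcd_eq_gcd_ab k N
  have hd0 : 0 < d := by
    have h1 : Int.gcd k N ≠ 0 := by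
      simp [Int.gcd_eq_zero_iff]; omega
    have h2 : 0 < Int.gcd k N := Nat.pos_of_ne_zero h1
    rw [hd]; exact_mod_cast h2
  have hdk : d ∣ k := Int.gcd_dvd_left k N
  have hdN : d ∣ N := Int.gcd_dvd_right k N
  refine ⟨r, fun i => ?_⟩
  rw [ascent_iff' hk hkN i,
    show i + r - 1 = (i + r) - 1 by ring,
    descent_iff' (by omega) (by omega) (i + r)]
  set b : ℤ := (k * i) % N with hbdef
  have hb0 : 0 ≤ b := Int.emod_nonneg _ hN.ne'
  have hbN : b < N := Int.emod_lt_of_pos _ hN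
  obtain ⟨q, hq⟩ : ∃ q, k * i = N * q + b := ⟨k * i / N, by have h := Int.mul_ediv_add_emod (k * i) N; rw [hbdef]; linarith⟩
  have hdb : d ∣ b := by
    have h1 : b = k * i - N * q := by omega
    rw [h1]
    exact dvd_sub (hdk.mul_right i) (hdN.mul_right q)
  have hdleN : d ≤ N := Int.le_of_dvd hN hdN
  have hbNd : b ≤ N - d := by
    rcases eq_or_lt_of_le hb0 with h | h
    · omega
    · have h1 : d ∣ (N - b) := dvd_sub hdN hdb
      have := Int.le_of_dvd (by omega) h1
      omega
  have hkNd : k ≤ N - d := by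
    have h1 : d ∣ (N - k) := dvd_sub hdN hdk
    have := Int.le_of_dvd (by omega) h1
    omega
  have key : ((N - k) * (i + r)) % N = N - (b + d) := by
    have hkr : k * r = d - N * B := by linarith [hbez]
    have e1 : (N - k) * (i + r) = (N - (b + d)) + N * (i + r + B - q - 1) := by
      calc (N - k) * (i + r) = N * (i + r) - (k * i) - (k * r) := by ring
        _ = N * (i + r) - (N * q + b) - (d - N * B) := by rw [hq, hkr]
        _ = (N - (b + d)) + N * (i + r + B - q - 1) := by ring
    rw [e1, Int.add_mul_emod_self_left, Int.emod_eq_of_lt (by omega) (by omega)]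
  rw [key]
  have := dvd_lt_iff' hd0 hdk hdb
  omega
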